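/- Let X be a closed subset of ℝⁿ and a ∈ X. If s ≥ s_X(a,p), then T^p_a I^s(X) ⊆ T^p_a F_a(X), where F_a(X) is the formal local ideal of X at a. -/

import Mathlib

set_option linter.unusedVariables false
open Filter Topology

/-- The space `P_p(ℝⁿ)` of polynomial functions of degree at most `p` on `ℝⁿ`,
realized as a submodule of the space of all functions `ℝⁿ → ℝ`. -/
noncomputable def polyFun (n p : ℕ) : Submodule ℝ ((Fin n → ℝ) → ℝ) where
  carrier := {f | ∃ P : MvPolynomial (Fin n) ℝ, P.totalDegree ≤ p ∧
    f = fun x => MvPolynomial.eval x P}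
  zero_mem' := ⟨0, by simp, by funext x; simp⟩
  add_mem' := by
    rintro f g ⟨P, hP, rfl⟩ ⟨Q, hQ, rfl⟩
    exact ⟨P + Q, le_trans (MvPolynomial.totalDegree_add P Q) (max_le hP hQ),
      by funext x; simp⟩
  smul_mem' := by
    rintro c f ⟨P, hP, rfl⟩
    refine ⟨MvPolynomial.C c * P, le_trans (MvPolynomial.totalDegree_mul _ _) ?_,
      by funext x; simp⟩
    simpa [MvPolynomial.totalDegree_C] using hP

/-- `P_p(ℝⁿ)` as a type (with the topology induced from pointwise convergence,
which is the canonical topology on this finite-dimensional space). -/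
abbrev Pp (n p : ℕ) : Type := ↥(polyFun n p)

/-- The dual space `P_p(ℝⁿ)*`, with its (weak-*) topology; since `P_p` is
finite dimensional, this is the canonical topology on the dual. -/
abbrev PpD (n p : ℕ) : Type := WeakDual ℝ (Pp n p)

/-- The evaluation functional `δ_a ∈ P_p*`, `δ_a(P) = P(a)`. -/
noncomputable def deltaF (n p : ℕ) (a : Fin n → ℝ) : PpD n p :=
  ⟨{ toFun := fun f => (f : (Fin n → ℝ) → ℝ) a,
     map_add' := fun f g => rfl,
     map_smul' := fun c f => rfl },
   (continuous_apply a).comp continuous_subtype_val⟩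

/-- The function `x ↦ (x-b)^α / α!` on `ℝⁿ`. -/
noncomputable def monF (n : ℕ) (b : Fin n → ℝ) (α : Fin n → ℕ) : (Fin n → ℝ) → ℝ :=
  fun x => (∏ i, ((α i).factorial : ℝ))⁻¹ * ∏ i, (x i - b i) ^ α i

theorem monF_mem (n p : ℕ) (b : Fin n → ℝ) (α : Fin n → ℕ) (hα : ∑ i, α i ≤ p) :
    monF n b α ∈ polyFun n p := by
  refine ⟨MvPolynomial.C (∏ i, ((α i).factorial : ℝ))⁻¹ *
    ∏ i, (MvPolynomial.X i - MvPolynomial.C (b i)) ^ α i, ?_, ?_⟩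
  · refine le_trans (MvPolynomial.totalDegree_mul _ _) ?_
    rw [MvPolynomial.totalDegree_C]
    rw [zero_add]
    refine le_trans (MvPolynomial.totalDegree_finset_prod _ _) (le_trans
      (Finset.sum_le_sum fun i _ => ?_) hα)
    refine le_trans (MvPolynomial.totalDegree_pow _ _) ?_
    have h1 : (MvPolynomial.X i - MvPolynomial.C (b i) : MvPolynomial (Fin n) ℝ).totalDegree ≤ 1 := by
      rw [sub_eq_add_neg]
      refine le_trans (MvPolynomial.totalDegree_add _ _) ?_
      simp [MvPolynomial.totalDegree_X, MvPolynomial.totalDegree_neg,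
        MvPolynomial.totalDegree_C]
    calc α i * (MvPolynomial.X i - MvPolynomial.C (b i) :
        MvPolynomial (Fin n) ℝ).totalDegree ≤ α i * 1 := Nat.mul_le_mul_left _ h1
      _ = α i := mul_one _
  · funext x
    simp [monF, MvPolynomial.eval_prod]

/-- The monomial `(x-b)^α / α!` as an element of `P_p` (junk value `0` if `|α| > p`). -/
noncomputable def mon (n p : ℕ) (b : Fin n → ℝ) (α : Fin n → ℕ) : Pp n p :=
  if h : ∑ i, α i ≤ p then ⟨monF n b α, monF_mem n p b α h⟩ else 0

/-- The finite set of multiindices `α ∈ ℕⁿ` with `|α| ≤ p`. -/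
noncomputable def degSet (n p : ℕ) : Finset (Fin n → ℕ) :=
  (Fintype.piFinset fun _ : Fin n => Finset.range (p + 1)).filter fun α => ∑ i, α i ≤ p

/-- The polynomial `T^p_a F(x) = Σ_{|α| ≤ p} F^α(a) (x-a)^α / α!` attached to a family
`F = (F^α)` of functions. -/
noncomputable def tfield (n p : ℕ) (F : (Fin n → ℕ) → (Fin n → ℝ) → ℝ)
    (a : Fin n → ℝ) : Pp n p :=
  ∑ α ∈ degSet n p, F α a • mon n p a α

/-- The Whitney remainder `(R^p_a F)^α (b) = F^α(b) - Σ_{|β| ≤ p-|α|} F^{α+β}(a)(b-a)^β/β!`. -/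
noncomputable def rem (n p : ℕ) (F : (Fin n → ℕ) → (Fin n → ℝ) → ℝ)
    (a b : Fin n → ℝ) (α : Fin n → ℕ) : ℝ :=
  F α b - ∑ β ∈ degSet n (p - ∑ i, α i),
    F (α + β) a * (∏ i, (b i - a i) ^ β i) / (∏ i, ((β i).factorial : ℝ))

/-- `F = (F^α)_{|α| ≤ p}` is a `C^p` Whitney field on `X`: the rescaled remainders
`δ_α(a,b) = (R^p_a F)^α(b) / |b-a|^{p-|α|}` tend to `0` as `|a-b| → 0`, `a, b ∈ X`. -/
def IsWhitneyField (n p : ℕ) (F : (Fin n → ℕ) → (Fin n → ℝ) → ℝ)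
    (X : Set (Fin n → ℝ)) : Prop :=
  ∀ α : Fin n → ℕ, ∑ i, α i ≤ p → ∀ ε > (0 : ℝ), ∃ δ > (0 : ℝ),
    ∀ a ∈ X, ∀ b ∈ X, a ≠ b → ‖b - a‖ < δ →
      |rem n p F a b α| ≤ ε * ‖b - a‖ ^ (p - ∑ i, α i)

/-- The set `ΔE` of (4.9): sums `ξ + η` of functionals from two fibres of `E`,
subject to the bound `|a-b|^{p-|α|} |η((x-b)^α/α!)| ≤ 1`. -/
noncomputable def deltaSet (n p : ℕ) (E : Set ((Fin n → ℝ) × PpD n p)) :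
    Set ((Fin n → ℝ) × (Fin n → ℝ) × PpD n p) :=
  {q | ∃ a b ξ η, (a, ξ) ∈ E ∧ (b, η) ∈ E ∧
    (∀ α : Fin n → ℕ, ∑ i, α i ≤ p →
      ‖a - b‖ ^ (p - ∑ i, α i) * |η (mon n p b α)| ≤ 1) ∧
    q = (a, b, ξ + η)}

/-- The Glaeser operation (4.10)-(4.11): `ρ(E)_a` is the span of the diagonal trace
of the closure of `ΔE`. -/
noncomputable def rhoOp (n p : ℕ) (X : Set (Fin n → ℝ))
    (E : Set ((Fin n → ℝ) × PpD n p)) : Set ((Fin n → ℝ) × PpD n p) :=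
  {q | q.1 ∈ X ∧ q.2 ∈ Submodule.span ℝ
    {ξ : PpD n p | (q.1, q.1, ξ) ∈ closure (deltaSet n p E)}}

/-- The initial bundle `{(a, λδ_a) : a ∈ X, λ ∈ ℝ}`. -/
noncomputable def e0 (n p : ℕ) (X : Set (Fin n → ℝ)) : Set ((Fin n → ℝ) × PpD n p) :=
  {q | q.1 ∈ X ∧ ∃ c : ℝ, q.2 = c • deltaF n p q.1}

/-- The paratangent bundle of order `p` of `X` (Definition 4.12): the Glaeser
saturation (stable iterate, reached after `2·dim` steps) of the delta bundle. -/
noncomputable def tau (n p : ℕ) (X : Set (Fin n → ℝ)) : Set ((Fin n → ℝ) × PpD n p) :=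
  (rhoOp n p X)^[2 * Module.finrank ℝ (PpD n p)] (e0 n p X)

/-- `ΔΦ` of (4.14), for bundles of subspaces of `P_p* × ℝ`. -/
noncomputable def deltaSetF (n p : ℕ) (Φ : Set ((Fin n → ℝ) × (PpD n p × ℝ))) :
    Set ((Fin n → ℝ) × (Fin n → ℝ) × (PpD n p × ℝ)) :=
  {q | ∃ a b ξ η, (a, ξ) ∈ Φ ∧ (b, η) ∈ Φ ∧
    (∀ α : Fin n → ℕ, ∑ i, α i ≤ p →
      ‖a - b‖ ^ (p - ∑ i, α i) * |η.1 (mon n p b α)| ≤ 1) ∧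
    q = (a, b, ξ + η)}

/-- The Glaeser operation (4.15) on bundles of subspaces of `P_p* × ℝ`. -/
noncomputable def rhoOpF (n p : ℕ) (X : Set (Fin n → ℝ))
    (Φ : Set ((Fin n → ℝ) × (PpD n p × ℝ))) : Set ((Fin n → ℝ) × (PpD n p × ℝ)) :=
  {q | q.1 ∈ X ∧ q.2 ∈ Submodule.span ℝ
    {v : PpD n p × ℝ | (q.1, q.1, v) ∈ closure (deltaSetF n p Φ)}}

/-- The initial bundle `{(a, (λδ_a, λ f(a))) : a ∈ X, λ ∈ ℝ}`. -/
noncomputable def phi0 (n p : ℕ) (f : (Fin n → ℝ) → ℝ) (X : Set (Fin n → ℝ)) :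
    Set ((Fin n → ℝ) × (PpD n p × ℝ)) :=
  {q | q.1 ∈ X ∧ ∃ c : ℝ, q.2 = (c • deltaF n p q.1, c * f q.1)}

/-- `∇^p f` (Definition 4.16): the Glaeser saturation of `{(a, λδ_a, λ f(a))}`. -/
noncomputable def nabla (n p : ℕ) (f : (Fin n → ℝ) → ℝ) (X : Set (Fin n → ℝ)) :
    Set ((Fin n → ℝ) × (PpD n p × ℝ)) :=
  (rhoOpF n p X)^[2 * Module.finrank ℝ (PpD n p × ℝ)] (phi0 n p f X)

/-- `Φ` is the graph of a function `T → ℝ`: `Φ ⊆ T × ℝ` and over each point of `T`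
there is exactly one value. -/
def IsGraphOn (n p : ℕ) (Φ : Set ((Fin n → ℝ) × (PpD n p × ℝ)))
    (T : Set ((Fin n → ℝ) × PpD n p)) : Prop :=
  (∀ a ξ c, (a, (ξ, c)) ∈ Φ → (a, ξ) ∈ T) ∧
  ∀ a ξ, (a, ξ) ∈ T → ∃! c : ℝ, (a, (ξ, c)) ∈ Φ

/-- Partial derivative `∂/∂x_i` of a function on `ℝⁿ`. -/
noncomputable def pder (n : ℕ) (i : Fin n) (h : (Fin n → ℝ) → ℝ) : (Fin n → ℝ) → ℝ :=
  fun a => fderiv ℝ h a (Pi.single i 1)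

/-- Iterated partial derivative `(∂/∂x_i)^k`. -/
noncomputable def pderPow (n : ℕ) (i : Fin n) : ℕ → ((Fin n → ℝ) → ℝ) → ((Fin n → ℝ) → ℝ)
  | 0 => id
  | k + 1 => fun h => pder n i (pderPow n i k h)

/-- Multi-index partial derivative `D^α = ∏_i (∂/∂x_i)^{α_i}`. -/
noncomputable def dAlpha (n : ℕ) (α : Fin n → ℕ) (h : (Fin n → ℝ) → ℝ) :
    (Fin n → ℝ) → ℝ :=
  (List.finRange n).foldr (fun i g => pderPow n i (α i) g) h

/-- The Taylor polynomial of order `p` of `h` at `a`, as an element of `P_p`. -/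
noncomputable def taylorPoly (n p : ℕ) (h : (Fin n → ℝ) → ℝ) (a : Fin n → ℝ) : Pp n p :=
  ∑ α ∈ degSet n p, dAlpha n α h a • mon n p a α

/-- The truncation at order `p` of the formal power series `Σ_α c_α (x-a)^α`,
as an element of `P_p`. -/
noncomputable def truncSeries (n p : ℕ) (c : (Fin n → ℕ) → ℝ) (a : Fin n → ℝ) : Pp n p :=
  ∑ α ∈ degSet n p, (c α * ∏ i, ((α i).factorial : ℝ)) • mon n p a α

/-- The formal local ideal `F_a(X)`: formal power series (centered at `a`, given by
their coefficients) all of whose truncations `T^p_a F(x)` are `o(|x-a|^p)` on `X`. -/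
def formalIdeal (n : ℕ) (X : Set (Fin n → ℝ)) (a : Fin n → ℝ) :
    Set ((Fin n → ℕ) → ℝ) :=
  {c | ∀ p : ℕ, ∀ ε > (0 : ℝ), ∃ δ > (0 : ℝ), ∀ x ∈ X, ‖x - a‖ < δ →
    |(truncSeries n p c a : (Fin n → ℝ) → ℝ) x| ≤ ε * ‖x - a‖ ^ p}

/-- `T^p_a I^q(X)`: Taylor polynomials of order `p` at `a` of `C^q` functions
vanishing on `X`. -/
def tIdeal (n q p : ℕ) (X : Set (Fin n → ℝ)) (a : Fin n → ℝ) : Set (Pp n p) :=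
  {Q | ∃ h : (Fin n → ℝ) → ℝ, ContDiff ℝ q h ∧ (∀ x ∈ X, h x = 0) ∧
    Q = taylorPoly n p h a}

/-- The pullback `φ*_b : P_p(ℝⁿ) → P_p(ℝᵐ)`, `P ↦ T^p_b (P ∘ φ)`. -/
noncomputable def pullPoly (n m p : ℕ) (φ : (Fin m → ℝ) → (Fin n → ℝ))
    (b : Fin m → ℝ) (P : Pp n p) : Pp m p :=
  taylorPoly m p (fun y => (P : (Fin n → ℝ) → ℝ) (φ y)) b

section Dev
variable {n : ℕ}

/-- foldr over an arbitrary list of coordinates. -/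
noncomputable def dL (n : ℕ) (l : List (Fin n)) (α : Fin n → ℕ)
    (h : (Fin n → ℝ) → ℝ) : (Fin n → ℝ) → ℝ :=
  l.foldr (fun i g => pderPow n i (α i) g) h

lemma dL_nil {α h} : dL n [] α h = h := rfl

lemma dL_cons {i l α h} : dL n (i :: l) α h = pderPow n i (α i) (dL n l α h) := rfl

lemma dAlpha_eq_dL {α h} : dAlpha n α h = dL n (List.finRange n) α h := rfl

lemma pder_zero_fun (i : Fin n) : pder n i (fun _ => (0:ℝ)) = fun _ => 0 := by
  funext x
  simp [pder]

lemma pder_add {h₁ h₂ : (Fin n → ℝ) → ℝ} (i : Fin n)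
    (H₁ : Differentiable ℝ h₁) (H₂ : Differentiable ℝ h₂) :
    pder n i (fun x => h₁ x + h₂ x) = fun x => pder n i h₁ x + pder n i h₂ x := by
  funext x
  simp [pder, fderiv_fun_add (H₁ x) (H₂ x)]

lemma pder_smul {h : (Fin n → ℝ) → ℝ} (i : Fin n) (c : ℝ)
    (H : Differentiable ℝ h) :
    pder n i (fun x => c * h x) = fun x => c * pder n i h x := by
  funext x
  simp [pder, fderiv_const_mul (H x) c]

lemma contDiff_pder {h : (Fin n → ℝ) → ℝ} {m : ℕ} (i : Fin n)
    (H : ContDiff ℝ (m + 1 : ℕ) h) : ContDiff ℝ (m : ℕ) (pder n i h) := by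
  have h1 : ContDiff ℝ (m : ℕ) (fderiv ℝ h) := by
    apply H.fderiv_right
    exact_mod_cast le_refl (m + 1)
  exact h1.clm_apply contDiff_const

lemma ContDiffNat.differentiable {h : (Fin n → ℝ) → ℝ} {m : ℕ}
    (H : ContDiff ℝ (m + 1 : ℕ) h) : Differentiable ℝ h := by
  apply H.differentiable
  simp

lemma contDiff_pderPow {h : (Fin n → ℝ) → ℝ} {m k : ℕ} (i : Fin n)
    (H : ContDiff ℝ (m + k : ℕ) h) : ContDiff ℝ (m : ℕ) (pderPow n i k h) := by
  induction k generalizing m with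
  | zero => simpa [pderPow] using H
  | succ k ih =>
    show ContDiff ℝ (m : ℕ) (pder n i (pderPow n i k h))
    exact contDiff_pder i (ih (m := m + 1) (by rw [show m + 1 + k = m + (k+1) by omega]; exact H))

lemma contDiff_dL {h : (Fin n → ℝ) → ℝ} {m : ℕ} {α : Fin n → ℕ} {l : List (Fin n)}
    (H : ContDiff ℝ (m + (l.map α).sum : ℕ) h) : ContDiff ℝ (m : ℕ) (dL n l α h) := by
  induction l generalizing m with
  | nil => simpa [dL_nil] using H
  | cons i l ih =>
    rw [dL_cons]
    apply contDiff_pderPow i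
    apply ih (m := m + α i)
    rw [show m + α i + (l.map α).sum = m + ((i :: l).map α).sum by simp; omega]
    exact H

lemma sum_eq_listsum (α : Fin n → ℕ) : ∑ i, α i = ((List.finRange n).map α).sum :=
  Fin.sum_univ_def α

lemma contDiff_dAlpha {h : (Fin n → ℝ) → ℝ} {m : ℕ} {α : Fin n → ℕ}
    (H : ContDiff ℝ (m + ∑ i, α i : ℕ) h) : ContDiff ℝ (m : ℕ) (dAlpha n α h) := by
  rw [dAlpha_eq_dL]
  exact contDiff_dL (by rw [← sum_eq_listsum]; exact H)

lemma pderPow_zero_fun (i : Fin n) (k : ℕ) :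
    pderPow n i k (fun _ => (0:ℝ)) = fun _ => 0 := by
  induction k with
  | zero => rfl
  | succ k ih => show pder n i (pderPow n i k _) = _; rw [ih]; exact pder_zero_fun i

lemma pderPow_add {h₁ h₂ : (Fin n → ℝ) → ℝ} (i : Fin n) (k : ℕ)
    (H₁ : ContDiff ℝ (k : ℕ) h₁) (H₂ : ContDiff ℝ (k : ℕ) h₂) :
    pderPow n i k (fun x => h₁ x + h₂ x) = fun x => pderPow n i k h₁ x + pderPow n i k h₂ x := by
  induction k generalizing h₁ h₂ with
  | zero => rfl
  | succ k ih =>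
    show pder n i (pderPow n i k _) = _
    have e1 : ContDiff ℝ (k:ℕ) h₁ := H₁.of_le (by exact_mod_cast Nat.le_succ k)
    have e2 : ContDiff ℝ (k:ℕ) h₂ := H₂.of_le (by exact_mod_cast Nat.le_succ k)
    rw [ih e1 e2]
    have d1 : Differentiable ℝ (pderPow n i k h₁) :=
      ContDiffNat.differentiable (m := 0) (contDiff_pderPow i (by rw [Nat.add_comm]; exact H₁))
    have d2 : Differentiable ℝ (pderPow n i k h₂) :=
      ContDiffNat.differentiable (m := 0) (contDiff_pderPow i (by rw [Nat.add_comm]; exact H₂))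
    exact pder_add i d1 d2

lemma pderPow_smul {h : (Fin n → ℝ) → ℝ} (i : Fin n) (k : ℕ) (c : ℝ)
    (H : ContDiff ℝ (k : ℕ) h) :
    pderPow n i k (fun x => c * h x) = fun x => c * pderPow n i k h x := by
  induction k generalizing h with
  | zero => rfl
  | succ k ih =>
    show pder n i (pderPow n i k _) = _
    rw [ih (H.of_le (by exact_mod_cast Nat.le_succ k))]
    exact pder_smul i c (ContDiffNat.differentiable (m := 0) (contDiff_pderPow i (by rw [Nat.add_comm]; exact H)))

lemma dL_zero_fun (l : List (Fin n)) (α : Fin n → ℕ) :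
    dL n l α (fun _ => (0:ℝ)) = fun _ => 0 := by
  induction l with
  | nil => rfl
  | cons i l ih => rw [dL_cons, ih]; exact pderPow_zero_fun i (α i)

lemma dL_add {h₁ h₂ : (Fin n → ℝ) → ℝ} (l : List (Fin n)) (α : Fin n → ℕ)
    (H₁ : ContDiff ℝ ((l.map α).sum : ℕ) h₁) (H₂ : ContDiff ℝ ((l.map α).sum : ℕ) h₂) :
    dL n l α (fun x => h₁ x + h₂ x) = fun x => dL n l α h₁ x + dL n l α h₂ x := by
  induction l generalizing h₁ h₂ with
  | nil => rfl
  | cons i l ih =>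
    have hle : ((l.map α).sum : ℕ) ≤ (((i :: l).map α).sum : ℕ) := by simp
    rw [dL_cons, ih (H₁.of_le (by exact_mod_cast hle)) (H₂.of_le (by exact_mod_cast hle))]
    have d1 : ContDiff ℝ (α i : ℕ) (dL n l α h₁) :=
      contDiff_dL (by rw [show α i + (l.map α).sum = ((i :: l).map α).sum by simp]; exact H₁)
    have d2 : ContDiff ℝ (α i : ℕ) (dL n l α h₂) :=
      contDiff_dL (by rw [show α i + (l.map α).sum = ((i :: l).map α).sum by simp]; exact H₂)
    rw [pderPow_add i (α i) d1 d2]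
    rfl

lemma dL_smul {h : (Fin n → ℝ) → ℝ} (l : List (Fin n)) (α : Fin n → ℕ) (c : ℝ)
    (H : ContDiff ℝ ((l.map α).sum : ℕ) h) :
    dL n l α (fun x => c * h x) = fun x => c * dL n l α h x := by
  induction l generalizing h with
  | nil => rfl
  | cons i l ih =>
    have hle : ((l.map α).sum : ℕ) ≤ (((i :: l).map α).sum : ℕ) := by simp
    rw [dL_cons, ih (H.of_le (by exact_mod_cast hle))]
    have d : ContDiff ℝ (α i : ℕ) (dL n l α h) :=
      contDiff_dL (by rw [show α i + (l.map α).sum = ((i :: l).map α).sum by simp]; exact H)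
    rw [pderPow_smul i (α i) c d]
    rfl

end Dev
section DevB
variable {n : ℕ}

lemma hasFDerivAt_pow_coord (j : Fin n) (b : ℝ) (k : ℕ) (x : Fin n → ℝ) :
    HasFDerivAt (fun x : Fin n → ℝ => (x j - b) ^ k)
      (((k : ℝ) * (x j - b) ^ (k - 1)) • ContinuousLinearMap.proj (R := ℝ)
        (φ := fun _ : Fin n => ℝ) j) x := by
  induction k with
  | zero => simpa using hasFDerivAt_const (1:ℝ) x
  | succ k ih =>
    have base : HasFDerivAt (fun x : Fin n → ℝ => x j - b)
        (ContinuousLinearMap.proj (R := ℝ) (φ := fun _ : Fin n => ℝ) j) x :=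
      by
        have h0 := (ContinuousLinearMap.proj (R := ℝ) (φ := fun _ : Fin n => ℝ) j).hasFDerivAt (x := x)
        exact h0.sub_const b
    have h := base.mul ih
    have e : (fun y : Fin n → ℝ => (y j - b) * (y j - b) ^ k) =
        fun y : Fin n → ℝ => (y j - b) ^ (k + 1) := by
      funext y; ring
    rw [show ((fun x : Fin n → ℝ => x j - b) * fun x => (x j - b) ^ k) = fun y : Fin n → ℝ => (y j - b) ^ (k + 1) from e] at h
    refine h.congr_fderiv ?_
    rw [smul_smul, ← add_smul]
    congr 1
    cases k with
    | zero => simp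
    | succ m =>
      push_cast
      ring

lemma pder_monF (i : Fin n) (b : Fin n → ℝ) (α : Fin n → ℕ) :
    pder n i (monF n b α) =
      if α i = 0 then (fun _ => 0) else monF n b (Function.update α i (α i - 1)) := by
  classical
  funext x
  have hprod : HasFDerivAt (fun x : Fin n → ℝ => ∏ j, (x j - b j) ^ α j)
      (∑ j, (∏ k ∈ Finset.univ.erase j, (x k - b k) ^ α k) •
        (((α j : ℝ) * (x j - b j) ^ (α j - 1)) • ContinuousLinearMap.proj (R := ℝ)
          (φ := fun _ : Fin n => ℝ) j)) x :=
    HasFDerivAt.finset_prod (fun j _ => hasFDerivAt_pow_coord j (b j) (α j) x)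
  have hm : HasFDerivAt (monF n b α)
      ((∏ i, ((α i).factorial : ℝ))⁻¹ • (∑ j, (∏ k ∈ Finset.univ.erase j, (x k - b k) ^ α k) •
        (((α j : ℝ) * (x j - b j) ^ (α j - 1)) • ContinuousLinearMap.proj (R := ℝ)
          (φ := fun _ : Fin n => ℝ) j))) x := hprod.const_mul _
  have happ : pder n i (monF n b α) x =
      (∏ i, ((α i).factorial : ℝ))⁻¹ * ((∏ k ∈ Finset.univ.erase i, (x k - b k) ^ α k) *
        ((α i : ℝ) * (x i - b i) ^ (α i - 1))) := by
    show fderiv ℝ (monF n b α) x (Pi.single i 1) = _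
    rw [hm.fderiv]
    rw [ContinuousLinearMap.smul_apply, ContinuousLinearMap.sum_apply]
    have : ∀ j, ((∏ k ∈ Finset.univ.erase j, (x k - b k) ^ α k) •
        (((α j : ℝ) * (x j - b j) ^ (α j - 1)) • ContinuousLinearMap.proj (R := ℝ)
          (φ := fun _ : Fin n => ℝ) j)) (Pi.single i (1:ℝ)) =
        (if j = i then (∏ k ∈ Finset.univ.erase j, (x k - b k) ^ α k) *
          ((α j : ℝ) * (x j - b j) ^ (α j - 1)) else 0) := by
      intro j
      rw [ContinuousLinearMap.smul_apply, ContinuousLinearMap.smul_apply,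
        ContinuousLinearMap.proj_apply]
      rcases eq_or_ne j i with rfl | hji
      · simp
      · simp [Pi.single_apply, hji]
    rw [Finset.sum_congr rfl (fun j _ => this j), Finset.sum_ite_eq' Finset.univ i]
    simp [smul_eq_mul, mul_assoc]
  rcases Nat.eq_zero_or_pos (α i) with h0 | hpos
  · rw [happ, if_pos h0, h0]
    simp
  · rw [happ, if_neg (Nat.pos_iff_ne_zero.mp hpos)]
    obtain ⟨m, hm'⟩ : ∃ m, α i = m + 1 := ⟨α i - 1, by omega⟩
    show _ = monF n b (Function.update α i (α i - 1)) x
    unfold monF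
    have e1 : ∏ j, (x j - b j) ^ (Function.update α i (α i - 1) j) =
        (x i - b i) ^ (α i - 1) * ∏ k ∈ Finset.univ.erase i, (x k - b k) ^ α k := by
      rw [← Finset.mul_prod_erase Finset.univ _ (Finset.mem_univ i)]
      congr 1
      · rw [Function.update_self]
      · exact Finset.prod_congr rfl fun k hk =>
          by rw [Function.update_of_ne (Finset.ne_of_mem_erase hk)]
    have e2 : ∏ j, (((Function.update α i (α i - 1) j).factorial : ℝ)) =
        (((α i - 1).factorial : ℝ)) * ∏ k ∈ Finset.univ.erase i, ((α k).factorial : ℝ) := by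
      rw [← Finset.mul_prod_erase Finset.univ _ (Finset.mem_univ i)]
      congr 1
      · rw [Function.update_self]
      · exact Finset.prod_congr rfl fun k hk =>
          by rw [Function.update_of_ne (Finset.ne_of_mem_erase hk)]
    have e3 : ∏ j, (((α j).factorial : ℝ)) =
        (((α i).factorial : ℝ)) * ∏ k ∈ Finset.univ.erase i, ((α k).factorial : ℝ) := by
      rw [← Finset.mul_prod_erase Finset.univ _ (Finset.mem_univ i)]
    rw [e1, e2, e3, hm']
    have hfact : ((m + 1).factorial : ℝ) = (m + 1) * (m.factorial : ℝ) := by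
      rw [Nat.factorial_succ]; push_cast; ring
    have hmm : m + 1 - 1 = m := by omega
    rw [hmm, hfact]
    have hf1 : (m.factorial : ℝ) ≠ 0 := Nat.cast_ne_zero.mpr (Nat.factorial_ne_zero m)
    have hf2 : ∀ k ∈ Finset.univ.erase i, (((α k).factorial : ℝ)) ≠ 0 :=
      fun k _ => Nat.cast_ne_zero.mpr (Nat.factorial_ne_zero (α k))
    have hf3 : (∏ k ∈ Finset.univ.erase i, ((α k).factorial : ℝ)) ≠ 0 :=
      Finset.prod_ne_zero_iff.mpr hf2
    field_simp
    push_cast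
    ring

lemma monF_apply_self (b : Fin n → ℝ) (α : Fin n → ℕ) :
    monF n b α b = if α = 0 then 1 else 0 := by
  classical
  unfold monF
  rcases eq_or_ne α 0 with rfl | hα
  · simp
  · rw [if_neg hα]
    obtain ⟨i, hi⟩ : ∃ i, α i ≠ 0 := by
      by_contra hc
      push_neg at hc
      exact hα (funext hc)
    have : ∏ j, (b j - b j) ^ α j = 0 :=
      Finset.prod_eq_zero (Finset.mem_univ i) (by simp [zero_pow hi])
    rw [this, mul_zero]

lemma pderPow_monF (i : Fin n) (k : ℕ) (b : Fin n → ℝ) (α : Fin n → ℕ) :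
    pderPow n i k (monF n b α) =
      if k ≤ α i then monF n b (Function.update α i (α i - k)) else fun _ => 0 := by
  classical
  induction k with
  | zero =>
    rw [if_pos (Nat.zero_le _)]
    show monF n b α = _
    simp [Function.update_eq_self]
  | succ k ih =>
    show pder n i (pderPow n i k (monF n b α)) = _
    rw [ih]
    rcases le_or_gt k (α i) with hk | hk
    · rw [if_pos hk]
      rcases Nat.lt_or_ge (α i) (k + 1) with hk2 | hk2
      · have h1 : Function.update α i (α i - k) i = 0 := by
          rw [Function.update_self]; omega
        rw [pder_monF, if_pos h1, if_neg (by omega)]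
      · have h1 : Function.update α i (α i - k) i ≠ 0 := by
          rw [Function.update_self]; omega
        rw [pder_monF, if_neg h1, if_pos (by omega), Function.update_self,
          Function.update_idem]
        congr 2
    · rw [if_neg (by omega), if_neg (by omega)]
      exact pder_zero_fun i
section DevC
variable {n : ℕ}

lemma contDiff_monF {m : ℕ} (b : Fin n → ℝ) (α : Fin n → ℕ) :
    ContDiff ℝ (m : ℕ) (monF n b α) := by
  have key : ∀ s : Finset (Fin n),
      ContDiff ℝ (m : ℕ) (fun x : Fin n → ℝ => ∏ j ∈ s, (x j - b j) ^ α j) := by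
    intro s
    induction s using Finset.cons_induction with
    | empty => simpa using contDiff_const
    | cons j s hj ih =>
      simp only [Finset.prod_cons]
      exact ContDiff.mul
        ((((ContinuousLinearMap.proj (R := ℝ) (φ := fun _ : Fin n => ℝ) j).contDiff).sub
          contDiff_const).pow _) ih
  exact contDiff_const.mul (key Finset.univ)

lemma differentiable_monF (b : Fin n → ℝ) (α : Fin n → ℕ) :
    Differentiable ℝ (monF n b α) :=
  ContDiffNat.differentiable (m := 0) (contDiff_monF (m := 1) b α)

lemma dL_congr_exp {β β' : Fin n → ℕ} (l : List (Fin n)) (h : (Fin n → ℝ) → ℝ)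
    (hb : ∀ j ∈ l, β j = β' j) : dL n l β h = dL n l β' h := by
  induction l with
  | nil => rfl
  | cons i l ih =>
    rw [dL_cons, dL_cons, ih (fun j hj => hb j (List.mem_cons_of_mem i hj)),
      hb i (List.mem_cons_self)]

lemma dL_zero_exp (l : List (Fin n)) (h : (Fin n → ℝ) → ℝ) :
    dL n l (fun _ => 0) h = h := by
  induction l with
  | nil => rfl
  | cons i l ih => rw [dL_cons, ih]; rfl

lemma dAlpha_zero_exp (h : (Fin n → ℝ) → ℝ) : dAlpha n (0 : Fin n → ℕ) h = h := by
  rw [dAlpha_eq_dL, show (0 : Fin n → ℕ) = fun _ => 0 from rfl, dL_zero_exp]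

lemma dL_monF (l : List (Fin n)) (hl : l.Nodup) (b : Fin n → ℝ) (α β : Fin n → ℕ) :
    dL n l β (monF n b α) =
      if ∀ j ∈ l, β j ≤ α j then
        monF n b (fun j => if j ∈ l then α j - β j else α j)
      else fun _ => 0 := by
  classical
  induction l with
  | nil =>
    rw [dL_nil, if_pos (by intro j hj; simp at hj)]
    congr 1
  | cons i l ih =>
    obtain ⟨hil, hnd⟩ := List.nodup_cons.mp hl
    rw [dL_cons, ih hnd]
    by_cases hcl : ∀ j ∈ l, β j ≤ α j
    · rw [if_pos hcl, pderPow_monF]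
      simp only [hil, if_false, ite_false]
      by_cases hbi : β i ≤ α i
      · rw [if_pos hbi,
          if_pos (by
            intro j hj
            rcases List.mem_cons.mp hj with rfl | hj
            exacts [hbi, hcl j hj])]
        have eupd : Function.update (fun j => if j ∈ l then α j - β j else α j) i
            (α i - β i) = fun j => if j ∈ i :: l then α j - β j else α j := by
          funext j
          rcases eq_or_ne j i with rfl | hji
          · rw [Function.update_self]
            simp
          · rw [Function.update_of_ne hji]
            by_cases hjl : j ∈ l
            · simp [hjl, List.mem_cons, hji]
            · simp [hjl, List.mem_cons, hji]
        rw [eupd]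
      · rw [if_neg hbi,
          if_neg (by
            push_neg
            exact ⟨i, List.mem_cons_self, by omega⟩)]
    · rw [if_neg hcl, pderPow_zero_fun,
        if_neg (by
          push_neg at hcl ⊢
          obtain ⟨j, hj1, hj2⟩ := hcl
          exact ⟨j, List.mem_cons_of_mem i hj1, hj2⟩)]

lemma dAlpha_monF_apply (b : Fin n → ℝ) (α β : Fin n → ℕ) :
    dAlpha n β (monF n b α) b = if α = β then 1 else 0 := by
  classical
  rw [dAlpha_eq_dL, dL_monF _ (List.nodup_finRange n)]
  by_cases hc : ∀ j, β j ≤ α j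
  · rw [if_pos (fun j _ => hc j)]
    have e : (fun j => if j ∈ List.finRange n then α j - β j else α j) =
        fun j => α j - β j := by
      funext j; simp [List.mem_finRange]
    rw [e, monF_apply_self]
    by_cases he : α = β
    · subst he
      rw [if_pos (by funext j; simp), if_pos rfl]
    · rw [if_neg, if_neg he]
      intro h0
      apply he
      funext j
      have h1 := congrFun h0 j
      simp at h1
      have h2 := hc j
      omega
  · push_neg at hc
    obtain ⟨j, hj⟩ := hc
    rw [if_neg (by push_neg; exact ⟨j, List.mem_finRange j, hj⟩),
      if_neg (by intro he; subst he; omega)]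

end DevC
section DevD
variable {n : ℕ}

lemma mem_degSet {p : ℕ} {α : Fin n → ℕ} : α ∈ degSet n p ↔ ∑ i, α i ≤ p := by
  unfold degSet
  rw [Finset.mem_filter]
  constructor
  · rintro ⟨-, h⟩; exact h
  · intro h
    refine ⟨Fintype.mem_piFinset.mpr fun i => ?_, h⟩
    rw [Finset.mem_range]
    have : α i ≤ ∑ j, α j :=
      Finset.single_le_sum (f := α) (fun j _ => Nat.zero_le _) (Finset.mem_univ i)
    omega

lemma zero_mem_degSet {p : ℕ} : (0 : Fin n → ℕ) ∈ degSet n p :=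
  mem_degSet.mpr (by simp)

lemma mon_coe {p : ℕ} {a : Fin n → ℝ} {α : Fin n → ℕ} (h : ∑ i, α i ≤ p) :
    ((mon n p a α : Pp n p) : (Fin n → ℝ) → ℝ) = monF n a α := by
  unfold mon
  rw [dif_pos h]

lemma taylorPoly_apply (p : ℕ) (h : (Fin n → ℝ) → ℝ) (a x : Fin n → ℝ) :
    (taylorPoly n p h a : (Fin n → ℝ) → ℝ) x =
      ∑ α ∈ degSet n p, dAlpha n α h a * monF n a α x := by
  unfold taylorPoly
  rw [AddSubmonoidClass.coe_finset_sum, Finset.sum_apply]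
  apply Finset.sum_congr rfl
  intro α hα
  rw [SetLike.val_smul, Pi.smul_apply, mon_coe (mem_degSet.mp hα), smul_eq_mul]

lemma truncSeries_apply (p : ℕ) (c : (Fin n → ℕ) → ℝ) (a x : Fin n → ℝ) :
    (truncSeries n p c a : (Fin n → ℝ) → ℝ) x =
      ∑ α ∈ degSet n p, (c α * ∏ i, ((α i).factorial : ℝ)) * monF n a α x := by
  unfold truncSeries
  rw [AddSubmonoidClass.coe_finset_sum, Finset.sum_apply]
  apply Finset.sum_congr rfl
  intro α hα
  rw [SetLike.val_smul, Pi.smul_apply, mon_coe (mem_degSet.mp hα), smul_eq_mul]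

lemma dL_sum {ι : Type*} (l : List (Fin n)) (α : Fin n → ℕ) (S : Finset ι)
    (f : ι → (Fin n → ℝ) → ℝ)
    (hf : ∀ j ∈ S, ContDiff ℝ ((l.map α).sum : ℕ) (f j)) :
    dL n l α (fun x => ∑ j ∈ S, f j x) = fun x => ∑ j ∈ S, dL n l α (f j) x := by
  classical
  induction S using Finset.induction with
  | empty => simpa using dL_zero_fun l α
  | @insert j s hj ih =>
    rw [show (fun x => ∑ k ∈ insert j s, f k x) = fun x => f j x + ∑ k ∈ s, f k x from
      funext fun x => Finset.sum_insert hj]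
    rw [dL_add l α (hf j (Finset.mem_insert_self j s))
      (ContDiff.sum fun k hk => hf k (Finset.mem_insert_of_mem hk)),
      ih (fun k hk => hf k (Finset.mem_insert_of_mem hk))]
    funext x
    rw [Finset.sum_insert hj]

lemma dAlpha_poly_apply (a : Fin n → ℝ) (q : ℕ) (c : (Fin n → ℕ) → ℝ) {β : Fin n → ℕ}
    (hβ : β ∈ degSet n q) :
    dAlpha n β (fun x => ∑ α ∈ degSet n q, c α * monF n a α x) a = c β := by
  classical
  have h1 : dAlpha n β (fun x => ∑ α ∈ degSet n q, c α * monF n a α x) =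
      fun x => ∑ α ∈ degSet n q, c α * dAlpha n β (monF n a α) x := by
    rw [dAlpha_eq_dL,
      dL_sum (List.finRange n) β (degSet n q) (fun α => fun x => c α * monF n a α x)
        (fun α _ => contDiff_const.mul (contDiff_monF a α))]
    funext x
    exact Finset.sum_congr rfl fun α _ =>
      congrFun (dL_smul (List.finRange n) β (c α) (contDiff_monF a α)) x
  rw [h1]
  show ∑ α ∈ degSet n q, c α * dAlpha n β (monF n a α) a = c β
  rw [Finset.sum_congr rfl fun α _ => by rw [dAlpha_monF_apply]]
  simp only [mul_ite, mul_one, mul_zero]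
  rw [Finset.sum_ite_eq' (degSet n q) β c, if_pos hβ]

lemma taylorPoly_coeff_eq {q : ℕ} {g h : (Fin n → ℝ) → ℝ} (a : Fin n → ℝ)
    (hgh : taylorPoly n q g a = taylorPoly n q h a) {β : Fin n → ℕ} (hβ : ∑ i, β i ≤ q) :
    dAlpha n β g a = dAlpha n β h a := by
  have e : (fun x => ∑ α ∈ degSet n q, dAlpha n α g a * monF n a α x) =
      (fun x => ∑ α ∈ degSet n q, dAlpha n α h a * monF n a α x) := by
    funext x
    rw [← taylorPoly_apply, ← taylorPoly_apply, hgh]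
  have h1 := dAlpha_poly_apply a q (fun α => dAlpha n α g a) (mem_degSet.mpr hβ)
  have h2 := dAlpha_poly_apply a q (fun α => dAlpha n α h a) (mem_degSet.mpr hβ)
  rw [← h1, ← h2, e]

lemma taylorPoly_apply_self (p : ℕ) (h : (Fin n → ℝ) → ℝ) (a : Fin n → ℝ) :
    (taylorPoly n p h a : (Fin n → ℝ) → ℝ) a = h a := by
  classical
  rw [taylorPoly_apply]
  rw [Finset.sum_congr rfl fun α (_ : α ∈ degSet n p) => by rw [monF_apply_self]]
  simp only [mul_ite, mul_one, mul_zero]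
  rw [Finset.sum_ite_eq' (degSet n p) 0 (fun α => dAlpha n α h a), if_pos zero_mem_degSet,
    dAlpha_zero_exp]

lemma dAlpha_apply_add {q N : ℕ} (hN : q ≤ N) {h₁ h₂ : (Fin n → ℝ) → ℝ}
    (H₁ : ContDiff ℝ (N : ℕ) h₁) (H₂ : ContDiff ℝ (N : ℕ) h₂) {α : Fin n → ℕ}
    (hα : ∑ i, α i ≤ q) (a : Fin n → ℝ) :
    dAlpha n α (fun x => h₁ x + h₂ x) a = dAlpha n α h₁ a + dAlpha n α h₂ a := by
  have hle : (((List.finRange n).map α).sum : ℕ) ≤ N := by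
    rw [← sum_eq_listsum]; omega
  have := dL_add (List.finRange n) α
    (H₁.of_le (by exact_mod_cast hle)) (H₂.of_le (by exact_mod_cast hle))
  rw [dAlpha_eq_dL, dAlpha_eq_dL, dAlpha_eq_dL, this]

lemma dAlpha_apply_smul {q N : ℕ} (hN : q ≤ N) {h : (Fin n → ℝ) → ℝ} (c : ℝ)
    (H : ContDiff ℝ (N : ℕ) h) {α : Fin n → ℕ} (hα : ∑ i, α i ≤ q) (a : Fin n → ℝ) :
    dAlpha n α (fun x => c * h x) a = c * dAlpha n α h a := by
  have hle : (((List.finRange n).map α).sum : ℕ) ≤ N := by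
    rw [← sum_eq_listsum]; omega
  have := dL_smul (List.finRange n) α c (H.of_le (by exact_mod_cast hle))
  rw [dAlpha_eq_dL, dAlpha_eq_dL, this]

lemma taylorPoly_add {q N : ℕ} (hN : q ≤ N) {h₁ h₂ : (Fin n → ℝ) → ℝ}
    (H₁ : ContDiff ℝ (N : ℕ) h₁) (H₂ : ContDiff ℝ (N : ℕ) h₂) (a : Fin n → ℝ) :
    taylorPoly n q (fun x => h₁ x + h₂ x) a = taylorPoly n q h₁ a + taylorPoly n q h₂ a := by
  unfold taylorPoly
  rw [← Finset.sum_add_distrib]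
  apply Finset.sum_congr rfl
  intro α hα
  rw [dAlpha_apply_add hN H₁ H₂ (mem_degSet.mp hα) a, add_smul]

lemma taylorPoly_smul {q N : ℕ} (hN : q ≤ N) {h : (Fin n → ℝ) → ℝ} (c : ℝ)
    (H : ContDiff ℝ (N : ℕ) h) (a : Fin n → ℝ) :
    taylorPoly n q (fun x => c * h x) a = c • taylorPoly n q h a := by
  unfold taylorPoly
  rw [Finset.smul_sum]
  apply Finset.sum_congr rfl
  intro α hα
  rw [dAlpha_apply_smul hN c H (mem_degSet.mp hα) a, smul_smul]

lemma taylorPoly_zero (q : ℕ) (a : Fin n → ℝ) :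
    taylorPoly n q (fun _ => (0:ℝ)) a = 0 := by
  unfold taylorPoly
  apply Finset.sum_eq_zero
  intro α hα
  rw [dAlpha_eq_dL, dL_zero_fun]
  simp

end DevD
section DevE
variable {n : ℕ}

lemma pder_comm {g : (Fin n → ℝ) → ℝ} (i j : Fin n) (H : ContDiff ℝ (2:ℕ) g) :
    pder n i (pder n j g) = pder n j (pder n i g) := by
  funext x
  have hdiff : Differentiable ℝ g := H.differentiable (by simp)
  have h1 : ContDiff ℝ (1:ℕ) (fderiv ℝ g) := H.fderiv_right (by exact_mod_cast le_refl 2)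
  have hfd : Differentiable ℝ (fderiv ℝ g) := h1.differentiable (by simp)
  have hf : ∀ y, HasFDerivAt g (fderiv ℝ g y) y := fun y => (hdiff y).hasFDerivAt
  have hx : HasFDerivAt (fderiv ℝ g) (fderiv ℝ (fderiv ℝ g) x) x := (hfd x).hasFDerivAt
  have comp : ∀ (v w : Fin n → ℝ), fderiv ℝ (fun y => fderiv ℝ g y v) x w =
      fderiv ℝ (fderiv ℝ g) x w v := by
    intro v w
    rw [fderiv_clm_apply (hfd x) (differentiableAt_const v)]
    simp
  have key := second_derivative_symmetric hf hx (Pi.single i 1) (Pi.single j 1)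
  show fderiv ℝ (fun y => fderiv ℝ g y (Pi.single j 1)) x (Pi.single i 1) =
    fderiv ℝ (fun y => fderiv ℝ g y (Pi.single i 1)) x (Pi.single j 1)
  rw [comp, comp]
  exact key

lemma pder_pderPow_comm {g : (Fin n → ℝ) → ℝ} (i j : Fin n) (k : ℕ)
    (H : ContDiff ℝ (k + 1 : ℕ) g) :
    pder n i (pderPow n j k g) = pderPow n j k (pder n i g) := by
  induction k with
  | zero => rfl
  | succ k ih =>
    show pder n i (pder n j (pderPow n j k g)) = _
    have h2 : ContDiff ℝ (2:ℕ) (pderPow n j k g) :=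
      contDiff_pderPow j (by rw [show (2 + k : ℕ) = k + 1 + 1 by omega]; exact H)
    rw [pder_comm i j h2, ih (H.of_le (by exact_mod_cast Nat.le_succ (k+1)))]
    rfl

lemma pderPow_succ_inner {h : (Fin n → ℝ) → ℝ} (i : Fin n) (k : ℕ) :
    pderPow n i (k + 1) h = pderPow n i k (pder n i h) := by
  induction k with
  | zero => rfl
  | succ k ih =>
    show pder n i (pderPow n i (k + 1) h) = _
    rw [ih]
    rfl

lemma pder_dL_comm {g : (Fin n → ℝ) → ℝ} (i : Fin n) (l : List (Fin n)) {β : Fin n → ℕ}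
    (H : ContDiff ℝ ((l.map β).sum + 1 : ℕ) g) :
    pder n i (dL n l β g) = dL n l β (pder n i g) := by
  induction l with
  | nil => rfl
  | cons j l ih =>
    rw [dL_cons, dL_cons]
    have hG : ContDiff ℝ (β j + 1 : ℕ) (dL n l β g) := by
      apply contDiff_dL
      rw [show β j + 1 + (l.map β).sum = ((j :: l).map β).sum + 1 by simp; omega]
      exact H
    have hle : ((l.map β).sum + 1 : ℕ) ≤ (((j :: l).map β).sum + 1 : ℕ) := by
      simp only [List.map_cons, List.sum_cons]; omega
    rw [pder_pderPow_comm i j (β j) hG, ih (H.of_le (by exact_mod_cast hle))]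

lemma dL_insert {g : (Fin n → ℝ) → ℝ} {β : Fin n → ℕ} (i : Fin n) (l : List (Fin n))
    (hnd : l.Nodup) (hi : i ∈ l) {M : ℕ} (hM : (l.map β).sum + 1 ≤ M)
    (H : ContDiff ℝ (M : ℕ) g) :
    dL n l (Function.update β i (β i + 1)) g = dL n l β (pder n i g) := by
  induction l with
  | nil => exact absurd hi List.not_mem_nil
  | cons j l ih =>
    obtain ⟨hjl, hnd'⟩ := List.nodup_cons.mp hnd
    rw [dL_cons, dL_cons]
    rcases eq_or_ne j i with rfl | hji
    · have hjnl : j ∉ l := hjl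
      rw [Function.update_self]
      rw [dL_congr_exp l g (fun k hk =>
        Function.update_of_ne (fun he => hjnl (by rw [← he]; exact hk)) _ β)]
      rw [pderPow_succ_inner]
      have hle : ((l.map β).sum + 1 : ℕ) ≤ M := by
        refine le_trans ?_ hM
        simp only [List.map_cons, List.sum_cons]
        omega
      have hsm : ContDiff ℝ ((l.map β).sum + 1 : ℕ) g := H.of_le (by exact_mod_cast hle)
      exact congrArg (pderPow n j (β j)) (pder_dL_comm j l hsm)
    · have hil : i ∈ l := by
        rcases List.mem_cons.mp hi with h' | h'
        · exact absurd h'.symm hji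
        · exact h'
      rw [Function.update_of_ne hji]
      rw [ih hnd' hil (by
        refine le_trans ?_ hM
        simp only [List.map_cons, List.sum_cons]
        omega)]

lemma dAlpha_insert {g : (Fin n → ℝ) → ℝ} {β : Fin n → ℕ} (i : Fin n) {M : ℕ}
    (hM : (∑ j, β j) + 1 ≤ M) (H : ContDiff ℝ (M : ℕ) g) :
    dAlpha n (Function.update β i (β i + 1)) g = dAlpha n β (pder n i g) := by
  rw [dAlpha_eq_dL, dAlpha_eq_dL]
  exact dL_insert i (List.finRange n) (List.nodup_finRange n) (List.mem_finRange i)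
    (by rw [← sum_eq_listsum]; exact hM) H

lemma pder_sum {ι : Type*} (S : Finset ι) (f : ι → (Fin n → ℝ) → ℝ)
    (hf : ∀ j ∈ S, Differentiable ℝ (f j)) (i : Fin n) :
    pder n i (fun x => ∑ j ∈ S, f j x) = fun x => ∑ j ∈ S, pder n i (f j) x := by
  funext y
  show fderiv ℝ _ y _ = _
  rw [fderiv_fun_sum (fun j hj => (hf j hj) y), ContinuousLinearMap.sum_apply]
  rfl

end DevE
section DevF
variable {n : ℕ}

lemma sum_update_of_pi (β : Fin n → ℕ) (i : Fin n) (v : ℕ) :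
    ∑ j, Function.update β i v j = v + ∑ j ∈ Finset.univ.erase i, β j := by
  rw [Finset.sum_update_of_mem (Finset.mem_univ i)]
  congr 1
  rw [Finset.sdiff_singleton_eq_erase]

lemma sum_split_pi (β : Fin n → ℕ) (i : Fin n) :
    ∑ j, β j = β i + ∑ j ∈ Finset.univ.erase i, β j :=
  (Finset.add_sum_erase Finset.univ β (Finset.mem_univ i)).symm

lemma pder_taylorPoly {q : ℕ} {h : (Fin n → ℝ) → ℝ} (H : ContDiff ℝ (q + 1 : ℕ) h)
    (a : Fin n → ℝ) (i : Fin n) :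
    pder n i (fun x => (taylorPoly n (q+1) h a : (Fin n → ℝ) → ℝ) x) =
      fun x => (taylorPoly n q (pder n i h) a : (Fin n → ℝ) → ℝ) x := by
  classical
  have e0 : (fun x => (taylorPoly n (q+1) h a : (Fin n → ℝ) → ℝ) x) =
      fun x => ∑ α ∈ degSet n (q+1), dAlpha n α h a * monF n a α x := by
    funext x; exact taylorPoly_apply _ _ _ _
  rw [e0, pder_sum _ _ (fun α _ => (differentiable_monF a α).const_mul _) i]
  funext x
  show (∑ α ∈ degSet n (q+1), pder n i (fun y => dAlpha n α h a * monF n a α y) x) = _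
  rw [taylorPoly_apply]
  have e1 : ∀ α, pder n i (fun y => dAlpha n α h a * monF n a α y) x =
      if ¬ α i = 0 then dAlpha n α h a * monF n a (Function.update α i (α i - 1)) x
      else 0 := by
    intro α
    rw [pder_smul i _ (differentiable_monF a α)]
    show dAlpha n α h a * pder n i (monF n a α) x = _
    rw [pder_monF]
    by_cases h0 : α i = 0
    · rw [if_pos h0, if_neg (not_not_intro h0)]
      simp
    · rw [if_neg h0, if_pos h0]
  rw [Finset.sum_congr rfl fun α _ => e1 α, ← Finset.sum_filter]
  refine Finset.sum_bij' (i := fun α _ => Function.update α i (α i - 1))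
    (j := fun β _ => Function.update β i (β i + 1)) ?_ ?_ ?_ ?_ ?_
  · intro α hα
    obtain ⟨hαd, hαi⟩ := Finset.mem_filter.mp hα
    have hs := mem_degSet.mp hαd
    apply mem_degSet.mpr
    rw [sum_update_of_pi]
    rw [sum_split_pi α i] at hs
    omega
  · intro β hβ
    have hs := mem_degSet.mp hβ
    apply Finset.mem_filter.mpr
    constructor
    · apply mem_degSet.mpr
      rw [sum_update_of_pi]
      rw [sum_split_pi β i] at hs
      omega
    · rw [Function.update_self]
      omega
  · intro α hα
    obtain ⟨hαd, hαi⟩ := Finset.mem_filter.mp hα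
    rw [Function.update_idem, Function.update_self]
    rw [show α i - 1 + 1 = α i by omega]
    exact Function.update_eq_self i α
  · intro β hβ
    rw [Function.update_idem, Function.update_self, Nat.add_sub_cancel]
    exact Function.update_eq_self i β
  · intro α hα
    obtain ⟨hαd, hαi⟩ := Finset.mem_filter.mp hα
    congr 1
    have hM : (∑ j, Function.update α i (α i - 1) j) + 1 ≤ q + 1 := by
      rw [sum_update_of_pi]
      have hs := mem_degSet.mp hαd
      rw [sum_split_pi α i] at hs
      omega
    have key := congrFun (dAlpha_insert (g := h) (β := Function.update α i (α i - 1)) i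
      hM H) a
    rw [Function.update_idem, Function.update_self,
      show α i - 1 + 1 = α i by omega, Function.update_eq_self] at key
    exact key.symm ▸ rfl

end DevF
section DevG
variable {n : ℕ}

lemma degSet_zero : degSet n 0 = {0} := by
  ext α
  rw [mem_degSet, Finset.mem_singleton]
  constructor
  · intro h0
    funext j
    exact (Finset.sum_eq_zero_iff.mp (Nat.le_zero.mp h0)) j (Finset.mem_univ j)
  · rintro rfl
    simp

lemma taylorPoly_zero_apply (h : (Fin n → ℝ) → ℝ) (a x : Fin n → ℝ) :
    (taylorPoly n 0 h a : (Fin n → ℝ) → ℝ) x = h a := by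
  rw [taylorPoly_apply, degSet_zero, Finset.sum_singleton]
  have e : dAlpha n 0 h a = h a := by rw [dAlpha_zero_exp]
  rw [e]
  simp [monF]

lemma contDiff_taylorFun (p : ℕ) (h : (Fin n → ℝ) → ℝ) (a : Fin n → ℝ) (m : ℕ) :
    ContDiff ℝ (m : ℕ) (fun y => (taylorPoly n p h a : (Fin n → ℝ) → ℝ) y) := by
  rw [show (fun y => (taylorPoly n p h a : (Fin n → ℝ) → ℝ) y) =
      fun y => ∑ α ∈ degSet n p, dAlpha n α h a * monF n a α y from
    funext fun y => taylorPoly_apply _ _ _ _]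
  exact ContDiff.sum fun α _ => contDiff_const.mul (contDiff_monF a α)

lemma taylor_estimate (q : ℕ) {h : (Fin n → ℝ) → ℝ} (H : ContDiff ℝ (q : ℕ) h)
    (a : Fin n → ℝ) {ε : ℝ} (hε : 0 < ε) :
    ∃ δ > (0:ℝ), ∀ x : Fin n → ℝ, ‖x - a‖ < δ →
      |h x - (taylorPoly n q h a : (Fin n → ℝ) → ℝ) x| ≤ ε * ‖x - a‖ ^ q := by
  induction q generalizing h ε with
  | zero =>
    have hc : ContinuousAt h a := H.continuous.continuousAt
    obtain ⟨δ, hδ, hd⟩ := Metric.continuousAt_iff.mp hc ε hε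
    refine ⟨δ, hδ, fun x hx => ?_⟩
    rw [taylorPoly_zero_apply, pow_zero, mul_one]
    have h2 : dist (h x) (h a) < ε := hd (by rw [dist_eq_norm]; exact hx)
    rw [Real.dist_eq] at h2
    exact h2.le
  | succ q ih =>
    rcases Nat.eq_zero_or_pos n with hn | hn
    · subst hn
      refine ⟨1, one_pos, fun x hx => ?_⟩
      have hxa : x = a := Subsingleton.elim x a
      subst hxa
      rw [taylorPoly_apply_self]
      simp only [sub_self, abs_zero]
      positivity
    have hne : (Finset.univ : Finset (Fin n)).Nonempty :=
      ⟨⟨0, hn⟩, Finset.mem_univ _⟩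
    set ε' := ε / (n + 1) with hε'def
    have hε'pos : 0 < ε' := by positivity
    have IH : ∀ i : Fin n, ∃ δ > (0:ℝ), ∀ x, ‖x - a‖ < δ →
        |pder n i h x - (taylorPoly n q (pder n i h) a : (Fin n → ℝ) → ℝ) x| ≤
          ε' * ‖x - a‖ ^ q :=
      fun i => ih (contDiff_pder i H) hε'pos
    choose δf hδf hbound using IH
    set δ := Finset.univ.inf' hne δf with hδdef
    have hδpos : 0 < δ := (Finset.lt_inf'_iff hne).mpr fun i _ => hδf i
    refine ⟨δ, hδpos, fun x hx => ?_⟩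
    set T : (Fin n → ℝ) → ℝ := fun y => (taylorPoly n (q+1) h a : (Fin n → ℝ) → ℝ) y
      with hTdef
    set R : (Fin n → ℝ) → ℝ := fun y => h y - T y with hRdef
    have hdiffh : Differentiable ℝ h :=
      H.differentiable (by simp)
    have hdiffT : Differentiable ℝ T :=
      (contDiff_taylorFun (q+1) h a 1).differentiable (by simp)
    have hdiffR : Differentiable ℝ R := hdiffh.sub hdiffT
    have hpder : ∀ (i : Fin n) (y : Fin n → ℝ),
        fderiv ℝ R y (Pi.single i 1) =
          pder n i h y - (taylorPoly n q (pder n i h) a : (Fin n → ℝ) → ℝ) y := by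
      intro i y
      have e1 : fderiv ℝ R y = fderiv ℝ h y - fderiv ℝ T y :=
        fderiv_sub (hdiffh y) (hdiffT y)
      rw [e1, ContinuousLinearMap.sub_apply]
      congr 1
      exact congrFun (pder_taylorPoly H a i) y
    have hC : (0:ℝ) ≤ (n : ℝ) * ε' * ‖x - a‖ ^ q := by positivity
    have hnorm : ∀ y ∈ Metric.closedBall a ‖x - a‖,
        ‖fderiv ℝ R y‖ ≤ (n : ℝ) * ε' * ‖x - a‖ ^ q := by
      intro y hy
      have hyx : ‖y - a‖ ≤ ‖x - a‖ := by
        rw [Metric.mem_closedBall, dist_eq_norm] at hy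
        exact hy
      have hyδ : ‖y - a‖ < δ := lt_of_le_of_lt hyx hx
      apply ContinuousLinearMap.opNorm_le_bound _ hC
      intro v
      have hv : fderiv ℝ R y v = ∑ i, v i * fderiv ℝ R y (Pi.single i 1) := by
        conv_lhs => rw [show v = ∑ i, Pi.single i (v i) from (Finset.univ_sum_single v).symm]
        rw [map_sum]
        apply Finset.sum_congr rfl
        intro i _
        have : (Pi.single i (v i) : Fin n → ℝ) = v i • (Pi.single i (1:ℝ) : Fin n → ℝ) := by
          funext j
          rcases eq_or_ne j i with rfl | hji
          · simp
          · simp [Pi.single_eq_of_ne hji]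
        rw [this, map_smul, smul_eq_mul]
      rw [hv, Real.norm_eq_abs]
      calc |∑ i, v i * fderiv ℝ R y (Pi.single i 1)|
          ≤ ∑ i, |v i * fderiv ℝ R y (Pi.single i 1)| :=
            Finset.abs_sum_le_sum_abs _ _
        _ ≤ ∑ _i : Fin n, ‖v‖ * (ε' * ‖x - a‖ ^ q) := by
            apply Finset.sum_le_sum
            intro i _
            rw [abs_mul]
            apply mul_le_mul
            · rw [← Real.norm_eq_abs]
              exact norm_le_pi_norm v i
            · rw [hpder i y]
              calc |pder n i h y - (taylorPoly n q (pder n i h) a :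
                    (Fin n → ℝ) → ℝ) y| ≤ ε' * ‖y - a‖ ^ q :=
                  hbound i y (lt_of_lt_of_le hyδ (Finset.inf'_le δf (Finset.mem_univ i)))
                _ ≤ ε' * ‖x - a‖ ^ q := by
                    apply mul_le_mul_of_nonneg_left _ hε'pos.le
                    exact pow_le_pow_left₀ (norm_nonneg _) hyx q
            · exact abs_nonneg _
            · exact norm_nonneg _
        _ = (n : ℝ) * ε' * ‖x - a‖ ^ q * ‖v‖ := by
            rw [Finset.sum_const, Finset.card_univ, Fintype.card_fin, nsmul_eq_mul]
            ring
    have hxball : x ∈ Metric.closedBall a ‖x - a‖ := by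
      rw [Metric.mem_closedBall, dist_eq_norm]
    have haball : a ∈ Metric.closedBall a ‖x - a‖ :=
      Metric.mem_closedBall_self (norm_nonneg _)
    have key := (convex_closedBall a ‖x - a‖).norm_image_sub_le_of_norm_fderiv_le
      (fun y _ => hdiffR y) hnorm haball hxball
    have hRa : R a = 0 := by
      rw [hRdef]
      show h a - T a = 0
      rw [hTdef]
      show h a - (taylorPoly n (q+1) h a : (Fin n → ℝ) → ℝ) a = 0
      rw [taylorPoly_apply_self, sub_self]
    rw [hRa, sub_zero] at key
    have e2 : |h x - (taylorPoly n (q+1) h a : (Fin n → ℝ) → ℝ) x| = ‖R x‖ := by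
      rw [Real.norm_eq_abs]
    rw [e2]
    calc ‖R x‖ ≤ (n : ℝ) * ε' * ‖x - a‖ ^ q * ‖x - a‖ := key
      _ = ((n : ℝ) * ε') * ‖x - a‖ ^ (q + 1) := by ring
      _ ≤ ε * ‖x - a‖ ^ (q + 1) := by
          apply mul_le_mul_of_nonneg_right _ (by positivity)
          rw [hε'def]
          rw [div_eq_mul_inv, ← mul_assoc]
          rw [mul_comm (n:ℝ) ε, mul_assoc]
          apply mul_le_of_le_one_right hε.le
          rw [← div_eq_mul_inv, div_le_one (by positivity)]
          linarith
  
end DevG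
section DevH
variable {n : ℕ}

lemma polyFun_le_span (q : ℕ) : polyFun n q ≤ Submodule.span ℝ
    ((fun α : Fin n → ℕ => (fun x : Fin n → ℝ => ∏ i, x i ^ α i)) '' (degSet n q : Set _)) := by
  rintro f ⟨P, hPdeg, rfl⟩
  have e : (fun x : Fin n → ℝ => MvPolynomial.eval x P) =
      ∑ d ∈ P.support, (MvPolynomial.coeff d P) •
        (fun x : Fin n → ℝ => ∏ i, x i ^ d i) := by
    funext x
    rw [Finset.sum_apply]
    rw [MvPolynomial.eval_eq']
    apply Finset.sum_congr rfl
    intro d _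
    rw [Pi.smul_apply, smul_eq_mul]
  rw [e]
  apply Submodule.sum_mem
  intro d hd
  apply Submodule.smul_mem
  apply Submodule.subset_span
  refine ⟨(d : Fin n → ℕ), ?_, rfl⟩
  rw [Finset.mem_coe, mem_degSet]
  have h1 := MvPolynomial.le_totalDegree hd
  have h2 : (d.sum fun _ e => e) = ∑ i, d i := Finsupp.sum_fintype _ _ (fun _ => rfl)
  omega

lemma finiteDimensional_Pp (q : ℕ) : FiniteDimensional ℝ (Pp n q) := by
  haveI : FiniteDimensional ℝ (Submodule.span ℝ
      ((fun α : Fin n → ℕ => (fun x : Fin n → ℝ => ∏ i, x i ^ α i)) '' (degSet n q : Set _))) :=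
    FiniteDimensional.span_of_finite ℝ (Set.Finite.image _ (degSet n q).finite_toSet)
  exact Submodule.finiteDimensional_of_le (polyFun_le_span q)

noncomputable def tSubmod (n q t : ℕ) (hqt : q ≤ t) (X : Set (Fin n → ℝ))
    (a : Fin n → ℝ) : Submodule ℝ (Pp n q) where
  carrier := tIdeal n t q X a
  zero_mem' := ⟨(fun _ => 0), contDiff_const, fun x _ => rfl, (taylorPoly_zero q a).symm⟩
  add_mem' := by
    rintro Q₁ Q₂ ⟨h₁, hc₁, hv₁, rfl⟩ ⟨h₂, hc₂, hv₂, rfl⟩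
    exact ⟨fun x => h₁ x + h₂ x, hc₁.add hc₂,
      fun x hx => by show h₁ x + h₂ x = 0; rw [hv₁ x hx, hv₂ x hx, add_zero],
      (taylorPoly_add hqt hc₁ hc₂ a).symm⟩
  smul_mem' := by
    rintro c Q ⟨h, hc, hv, rfl⟩
    exact ⟨fun x => c * h x, contDiff_const.mul hc,
      fun x hx => by show c * h x = 0; rw [hv x hx, mul_zero],
      (taylorPoly_smul hqt c hc a).symm⟩

lemma tIdeal_antitone {q t t' : ℕ} (htt : t ≤ t') {X : Set (Fin n → ℝ)} {a : Fin n → ℝ} :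
    tIdeal n t' q X a ⊆ tIdeal n t q X a := by
  rintro Q ⟨h, hc, hv, rfl⟩
  exact ⟨h, hc.of_le (by exact_mod_cast htt), hv, rfl⟩

lemma exists_stab (q : ℕ) (X : Set (Fin n → ℝ)) (a : Fin n → ℝ) :
    ∃ s0 : ℕ, q + 1 ≤ s0 ∧ ∀ t, s0 ≤ t → tIdeal n t q X a = tIdeal n s0 q X a := by
  haveI := finiteDimensional_Pp (n := n) q
  set S : ℕ → Submodule ℝ (Pp n q) := fun j => tSubmod n q (q + 1 + j) (by omega) X a
    with hSdef
  have hS : ∀ j, (S j : Set (Pp n q)) = tIdeal n (q + 1 + j) q X a := fun j => rfl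
  have hmono : ∀ j j', j ≤ j' → S j' ≤ S j := fun j j' hjj Q hQ =>
    tIdeal_antitone (by omega) hQ
  obtain ⟨m, ⟨j0, hj0⟩, hmin⟩ := (wellFounded_lt (α := ℕ)).has_min
    (Set.range fun j => Module.finrank ℝ (S j)) ⟨_, 0, rfl⟩
  refine ⟨q + 1 + j0, by omega, fun t ht => ?_⟩
  obtain ⟨j, rfl⟩ : ∃ j, t = q + 1 + j := ⟨t - (q + 1), by omega⟩
  have hle : S j ≤ S j0 := hmono j0 j (by omega)
  have hfr : Module.finrank ℝ (S j0) ≤ Module.finrank ℝ (S j) := by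
    have h1 := hmin (Module.finrank ℝ (S j)) ⟨j, rfl⟩
    have hj0' : Module.finrank ℝ (S j0) = m := hj0
    omega
  have heq : S j = S j0 := Submodule.eq_of_le_of_finrank_le hle hfr
  rw [← hS, ← hS, heq]

end DevH
/-- If `s ≥ s_X(a,p)` (i.e. `s ≥ p` and the sequence `T^p_a I^q(X)` has stabilized
at `s`), then `T^p_a I^s(X) ⊆ T^p_a F_a(X)`. -/
theorem tIdeal_subset_formalIdeal (n p s : ℕ) (X : Set (Fin n → ℝ))
    (hX : IsClosed X) (a : Fin n → ℝ) (ha : a ∈ X) (hps : p ≤ s)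
    (hstab : ∀ q, s ≤ q → tIdeal n q p X a = tIdeal n s p X a) :
    tIdeal n s p X a ⊆ {Q | ∃ c ∈ formalIdeal n X a, Q = truncSeries n p c a} := by
  classical
  intro Q hQ
  obtain ⟨σ, hσ1, hσ2⟩ : ∃ σ : ℕ → ℕ, (∀ q, q + 1 ≤ σ q) ∧
      ∀ q t, σ q ≤ t → tIdeal n t q X a = tIdeal n (σ q) q X a := by
    have h := fun q => exists_stab (n := n) q X a
    choose σ h1 h2 using h
    exact ⟨σ, h1, h2⟩
  have stab_eq : ∀ q t t', σ q ≤ t → σ q ≤ t' →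
      tIdeal n t q X a = tIdeal n t' q X a := fun q t t' h1 h2 =>
    (hσ2 q t h1).trans (hσ2 q t' h2).symm
  set t₀ := max s (σ p) with ht₀def
  obtain ⟨h₀, hc₀, hv₀, hQ₀⟩ : Q ∈ tIdeal n t₀ p X a := by
    rw [hstab t₀ (le_max_left _ _)]
    exact hQ
  -- the one-step extension
  have step_ex : ∀ (k : ℕ) (gt : ((Fin n → ℝ) → ℝ) × ℕ),
      ((∀ x ∈ X, gt.1 x = 0) ∧ ContDiff ℝ (gt.2 : ℕ) gt.1 ∧ σ (p + k) ≤ gt.2) →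
      ∃ gt' : ((Fin n → ℝ) → ℝ) × ℕ,
        ((∀ x ∈ X, gt'.1 x = 0) ∧ ContDiff ℝ (gt'.2 : ℕ) gt'.1 ∧ σ (p + (k+1)) ≤ gt'.2) ∧
        ∀ β : Fin n → ℕ, ∑ i, β i ≤ p + k → dAlpha n β gt'.1 a = dAlpha n β gt.1 a := by
    rintro k ⟨g, t⟩ ⟨hv, hc, hσt⟩
    have hmem : taylorPoly n (p + k) g a ∈
        tIdeal n (max (σ (p + k)) (σ (p + k + 1))) (p + k) X a := by
      rw [stab_eq (p + k) (max (σ (p + k)) (σ (p + k + 1))) t (le_max_left _ _) hσt]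
      exact ⟨g, hc, hv, rfl⟩
    obtain ⟨g', hc', hv', hg'⟩ := hmem
    refine ⟨(g', max (σ (p + k)) (σ (p + k + 1))), ⟨hv', hc', le_max_right _ _⟩, ?_⟩
    intro β hβ
    exact taylorPoly_coeff_eq a hg'.symm hβ
  have hbase : (∀ x ∈ X, h₀ x = 0) ∧ ContDiff ℝ (t₀ : ℕ) h₀ ∧ σ (p + 0) ≤ t₀ :=
    ⟨hv₀, hc₀, le_max_right _ _⟩
  let Seq : ∀ k : ℕ, {gt : ((Fin n → ℝ) → ℝ) × ℕ //
      (∀ x ∈ X, gt.1 x = 0) ∧ ContDiff ℝ (gt.2 : ℕ) gt.1 ∧ σ (p + k) ≤ gt.2} :=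
    fun k => Nat.rec ⟨(h₀, t₀), hbase⟩
      (fun k prev => ⟨(step_ex k prev.1 prev.2).choose,
        ((step_ex k prev.1 prev.2).choose_spec).1⟩) k
  have hcompat : ∀ (k : ℕ) (β : Fin n → ℕ), ∑ i, β i ≤ p + k →
      dAlpha n β (Seq (k+1)).1.1 a = dAlpha n β (Seq k).1.1 a :=
    fun k β hβ => ((step_ex k (Seq k).1 (Seq k).2).choose_spec).2 β hβ
  have hchain : ∀ (β : Fin n → ℕ) (k k' : ℕ), k ≤ k' → ∑ i, β i ≤ p + k →
      dAlpha n β (Seq k').1.1 a = dAlpha n β (Seq k).1.1 a := by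
    intro β k k' hkk hβ
    induction k' with
    | zero =>
      have : k = 0 := by omega
      subst this
      rfl
    | succ k' ih =>
      rcases Nat.eq_or_lt_of_le hkk with he | hl
      · rw [← he]
      · rw [hcompat k' β (by omega), ih (by omega)]
  set c : (Fin n → ℕ) → ℝ :=
    fun α => dAlpha n α (Seq (∑ i, α i)).1.1 a / ∏ i, ((α i).factorial : ℝ) with hcdef
  have hfact : ∀ α : Fin n → ℕ, (∏ i, ((α i).factorial : ℝ)) ≠ 0 := fun α =>
    Finset.prod_ne_zero_iff.mpr fun i _ => Nat.cast_ne_zero.mpr (Nat.factorial_ne_zero _)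
  have htrunc : ∀ q : ℕ, truncSeries n q c a = taylorPoly n q (Seq q).1.1 a := by
    intro q
    unfold truncSeries taylorPoly
    apply Finset.sum_congr rfl
    intro α hα
    congr 1
    rw [hcdef]
    rw [div_mul_cancel₀ _ (hfact α)]
    exact (hchain α (∑ i, α i) q (mem_degSet.mp hα) (by omega)).symm
  refine ⟨c, ?_, ?_⟩
  · -- c ∈ formalIdeal n X a
    intro q ε hε
    obtain ⟨hv', hc', hσ'⟩ := (Seq q).2
    have hcq : ContDiff ℝ (q : ℕ) (Seq q).1.1 := by
      apply hc'.of_le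
      have h1 := hσ1 (p + q)
      have : q ≤ (Seq q).1.2 := by omega
      exact_mod_cast this
    obtain ⟨δ, hδ, hest⟩ := taylor_estimate q hcq a hε
    refine ⟨δ, hδ, fun x hxX hxδ => ?_⟩
    have e1 : (truncSeries n q c a : (Fin n → ℝ) → ℝ) x =
        -((Seq q).1.1 x - (taylorPoly n q (Seq q).1.1 a : (Fin n → ℝ) → ℝ) x) := by
      rw [htrunc q, hv' x hxX, zero_sub, neg_neg]
    rw [e1, abs_neg]
    exact hest x hxδ
  · -- Q = truncSeries n p c a
    rw [htrunc p, hQ₀]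
    unfold taylorPoly
    apply Finset.sum_congr rfl
    intro α hα
    congr 1
    exact (hchain α 0 p (Nat.zero_le p) (by have := mem_degSet.mp hα; omega)).symm
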